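/- Van der Corput lemma: let L ≥ 2 be an integer. Then there exists a constant C > 0, depending only on L, such that for every compact interval [u,v] ⊂ ℝ, every real-valued function Ψ of class C^L on [u,v] satisfying |Ψ^{(L)}(λ)| ≥ T for all λ ∈ [u,v] and some T > 0, and every complex-valued function a of class C¹ on [u,v], one has |∫_u^v a(λ) e^{iΨ(λ)} dλ| ≤ C · ( sup_{λ∈[u,v]} |a(λ)| + ∫_u^v |a′(λ)| dλ ) · T^{−1/L}. -/

import Mathlib

open Set intervalIntegral MeasureTheory

/-- On an interval, a continuous function with `T ≤ |h|` has constant sign. -/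
lemma vdc_sign_const {A B T : ℝ} (hT : 0 < T) {h : ℝ → ℝ}
    (hc : ContinuousOn h (Icc A B)) (hh : ∀ x ∈ Icc A B, T ≤ |h x|) :
    (∀ x ∈ Icc A B, T ≤ h x) ∨ (∀ x ∈ Icc A B, h x ≤ -T) := by
  by_contra hcon
  push_neg at hcon
  obtain ⟨⟨x1, hx1, hx1'⟩, ⟨x2, hx2, hx2'⟩⟩ := hcon
  have h1 : h x1 ≤ -T := by
    rcases (le_abs'.mp (hh x1 hx1)) with h' | h'
    · linarith
    · linarith
  have h2 : T ≤ h x2 := by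
    rcases (le_abs'.mp (hh x2 hx2)) with h' | h'
    · linarith
    · linarith
  have hsub : uIcc x1 x2 ⊆ Icc A B := uIcc_subset_Icc hx1 hx2
  have : (0:ℝ) ∈ uIcc (h x1) (h x2) := by
    rw [mem_uIcc]; left; constructor <;> linarith
  obtain ⟨z, hz, hz'⟩ := intermediate_value_uIcc (hc.mono hsub) this
  have := hh z (hsub hz)
  rw [hz'] at this
  simp at this; linarith

/-- anchor point, positive-derivative case -/
lemma vdc_anchor_pos {A B T : ℝ} (hAB : A ≤ B) (hT : 0 < T) {g h : ℝ → ℝ}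
    (dg : ∀ x ∈ Icc A B, HasDerivWithinAt g (h x) (Icc A B) x)
    (hh : ∀ x ∈ Icc A B, T ≤ h x) :
    ∃ x0 ∈ Icc A B, ∀ x ∈ Icc A B, T * |x - x0| ≤ |g x| := by
  have hgc : ContinuousOn g (Icc A B) := fun x hx => (dg x hx).continuousWithinAt
  have hmvt : ∀ x ∈ Icc A B, ∀ y ∈ Icc A B, x ≤ y → T * (y - x) ≤ g y - g x := by
    intro x hx y hy hxy
    refine (convex_Icc A B).mul_sub_le_image_sub_of_le_deriv hgc ?_ ?_ x hx y hy hxy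
    · intro z hz
      rw [interior_Icc] at hz
      exact ((dg z (Ioo_subset_Icc_self hz)).hasDerivAt
        (Icc_mem_nhds hz.1 hz.2)).differentiableAt.differentiableWithinAt
    · intro z hz
      rw [interior_Icc] at hz
      rw [((dg z (Ioo_subset_Icc_self hz)).hasDerivAt (Icc_mem_nhds hz.1 hz.2)).deriv]
      exact hh z (Ioo_subset_Icc_self hz)
  rcases le_or_gt 0 (g A) with hga | hga
  · refine ⟨A, left_mem_Icc.mpr hAB, fun x hx => ?_⟩
    have h1 := hmvt A (left_mem_Icc.mpr hAB) x hx hx.1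
    rw [abs_of_nonneg (by linarith [hx.1] : (0:ℝ) ≤ x - A)]
    calc T * (x - A) ≤ g x - g A := h1
    _ ≤ g x := by linarith
    _ ≤ |g x| := le_abs_self _
  rcases le_or_gt (g B) 0 with hgb | hgb
  · refine ⟨B, right_mem_Icc.mpr hAB, fun x hx => ?_⟩
    have h1 := hmvt x hx B (right_mem_Icc.mpr hAB) hx.2
    rw [abs_sub_comm, abs_of_nonneg (by linarith [hx.2] : (0:ℝ) ≤ B - x)]
    calc T * (B - x) ≤ g B - g x := h1
    _ ≤ -g x := by linarith
    _ ≤ |g x| := neg_le_abs _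
  · obtain ⟨x0, hx0, hgx0⟩ := intermediate_value_Icc hAB hgc
      (⟨le_of_lt hga, le_of_lt hgb⟩ : (0:ℝ) ∈ Icc (g A) (g B))
    refine ⟨x0, hx0, fun x hx => ?_⟩
    rcases le_total x x0 with hxx | hxx
    · have h1 := hmvt x hx x0 hx0 hxx
      rw [hgx0] at h1
      rw [abs_of_nonpos (by linarith : x - x0 ≤ 0)]
      calc T * -(x - x0) = T * (x0 - x) := by ring
      _ ≤ -g x := by linarith
      _ ≤ |g x| := neg_le_abs _
    · have h1 := hmvt x0 hx0 x hx hxx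
      rw [hgx0] at h1
      rw [abs_of_nonneg (by linarith : (0:ℝ) ≤ x - x0)]
      calc T * (x - x0) ≤ g x - 0 := h1
      _ ≤ |g x| := by simpa using le_abs_self (g x)

/-- anchor point -/
lemma vdc_anchor {A B T : ℝ} (hAB : A ≤ B) (hT : 0 < T) {g h : ℝ → ℝ}
    (dg : ∀ x ∈ Icc A B, HasDerivWithinAt g (h x) (Icc A B) x)
    (hc : ContinuousOn h (Icc A B))
    (hh : ∀ x ∈ Icc A B, T ≤ |h x|) :
    ∃ x0 ∈ Icc A B, ∀ x ∈ Icc A B, T * |x - x0| ≤ |g x| := by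
  rcases vdc_sign_const hT hc hh with hp | hn
  · exact vdc_anchor_pos hAB hT dg hp
  · obtain ⟨x0, hx0, H⟩ := vdc_anchor_pos hAB hT (g := fun x => -g x) (h := fun x => -h x)
      (fun x hx => (dg x hx).neg) (fun x hx => by show T ≤ -h x; linarith [hn x hx])
    exact ⟨x0, hx0, fun x hx => by simpa using H x hx⟩

/-- within-version of `HasDerivAt.ofReal_comp` -/
lemma HasDerivWithinAt.ofReal_comp' {f : ℝ → ℝ} {u : ℝ} {s : Set ℝ} {z : ℝ}
    (hf : HasDerivWithinAt f u s z) :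
    HasDerivWithinAt (fun y : ℝ => (↑(f y) : ℂ)) (u : ℂ) s z := by
  simpa only [Function.comp_def, Complex.ofRealCLM_apply, Complex.ofReal_one, Complex.real_smul, mul_one] using
    Complex.ofRealCLM.hasDerivAt.scomp_hasDerivWithinAt z hf

lemma vdc_exp_norm (t : ℝ) : ‖Complex.exp (Complex.I * t)‖ = 1 := by
  rw [Complex.norm_exp]
  simp [Complex.mul_re]

/-- base estimate: monotone phase derivative, `|f1| ≥ T`. -/
lemma vdc_base {a b T : ℝ} (hab : a ≤ b) (hT : 0 < T) {f0 f1 f2 : ℝ → ℝ}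
    (d01 : ∀ x ∈ Icc a b, HasDerivWithinAt f0 (f1 x) (Icc a b) x)
    (d12 : ∀ x ∈ Icc a b, HasDerivWithinAt f1 (f2 x) (Icc a b) x)
    (c2 : ContinuousOn f2 (Icc a b))
    (hsgn : (∀ x ∈ Icc a b, 0 ≤ f2 x) ∨ (∀ x ∈ Icc a b, f2 x ≤ 0))
    (hf1 : ∀ x ∈ Icc a b, T ≤ |f1 x|) :
    ‖∫ x in a..b, Complex.exp (Complex.I * f0 x)‖ ≤ 4 / T := by
  have hne : ∀ x ∈ Icc a b, f1 x ≠ 0 := by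
    intro x hx h0
    have := hf1 x hx
    rw [h0] at this; simp at this; linarith
  have hc1 : ContinuousOn f1 (Icc a b) := fun x hx => (d12 x hx).continuousWithinAt
  have hc0 : ContinuousOn f0 (Icc a b) := fun x hx => (d01 x hx).continuousWithinAt
  set U : ℝ → ℂ := fun x => -Complex.I * ((f1 x)⁻¹ : ℝ) with hU
  set V : ℝ → ℂ := fun x => Complex.exp (Complex.I * f0 x) with hV
  set U' : ℝ → ℂ := fun x => -Complex.I * ((-f2 x / f1 x ^ 2 : ℝ) : ℂ) with hU'
  set V' : ℝ → ℂ := fun x => Complex.exp (Complex.I * f0 x) * (Complex.I * f1 x) with hV'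
  have dV : ∀ x ∈ Icc a b, HasDerivWithinAt V (V' x) (Icc a b) x := by
    intro x hx
    exact ((d01 x hx).ofReal_comp'.const_mul Complex.I).cexp
  have dU : ∀ x ∈ Icc a b, HasDerivWithinAt U (U' x) (Icc a b) x := by
    intro x hx
    exact (((d12 x hx).inv (hne x hx)).ofReal_comp').const_mul (-Complex.I)
  have hcU' : ContinuousOn U' (Icc a b) := by
    apply continuousOn_const.mul
    apply Complex.continuous_ofReal.comp_continuousOn
    exact (c2.neg.div (hc1.pow 2) (fun x hx => pow_ne_zero 2 (hne x hx)))
  have hcV' : ContinuousOn V' (Icc a b) := by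
    apply ContinuousOn.mul
    · exact (Complex.continuous_exp.comp_continuousOn
        ((Complex.continuous_ofReal.comp_continuousOn hc0).const_smul Complex.I))
    · exact continuousOn_const.mul (Complex.continuous_ofReal.comp_continuousOn hc1)
  have hiU' : IntervalIntegrable U' volume a b := by
    apply ContinuousOn.intervalIntegrable; rwa [uIcc_of_le hab]
  have hiV' : IntervalIntegrable V' volume a b := by
    apply ContinuousOn.intervalIntegrable; rwa [uIcc_of_le hab]
  have ibp : ∫ x in a..b, U x * V' x = U b * V b - U a * V a - ∫ x in a..b, U' x * V x := by
    apply integral_mul_deriv_eq_deriv_mul_of_hasDerivWithinAt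
    · intro x hx; rw [uIcc_of_le hab] at hx ⊢; exact dU x hx
    · intro x hx; rw [uIcc_of_le hab] at hx ⊢; exact dV x hx
    · exact hiU'
    · exact hiV'
  have key : ∫ x in a..b, V x = U b * V b - U a * V a - ∫ x in a..b, U' x * V x := by
    rw [← ibp]
    apply intervalIntegral.integral_congr
    intro x hx
    rw [uIcc_of_le hab] at hx
    have h1 : (f1 x : ℂ) ≠ 0 := Complex.ofReal_ne_zero.mpr (hne x hx)
    simp only [hU, hV, hV']
    push_cast [Complex.ofReal_inv]
    field_simp
    linear_combination Complex.I_mul_I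
  have hUnorm : ∀ x ∈ Icc a b, ‖U x‖ ≤ 1 / T := by
    intro x hx
    have h1 : (0:ℝ) < |f1 x| := lt_of_lt_of_le hT (hf1 x hx)
    simp only [hU, norm_mul, norm_neg, Complex.norm_I, one_mul, Complex.norm_real,
      Real.norm_eq_abs, abs_inv]
    rw [one_div]
    exact inv_anti₀ hT (hf1 x hx)
  have hVnorm : ∀ x : ℝ, ‖V x‖ = 1 := fun x => vdc_exp_norm (f0 x)
  -- the total variation estimate
  have hw : ∀ x ∈ Icc a b, HasDerivWithinAt (fun y => -(f1 y)⁻¹) (f2 x / f1 x ^ 2) (Icc a b) x := by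
    intro x hx
    rw [show f2 x / f1 x ^ 2 = -(-f2 x / f1 x ^ 2) by ring]
    exact ((d12 x hx).inv (hne x hx)).neg
  have hwint : ∫ x in a..b, f2 x / f1 x ^ 2 = -(f1 b)⁻¹ - -(f1 a)⁻¹ := by
    apply integral_eq_sub_of_hasDeriv_right_of_le hab
    · exact ((hc1.inv₀ hne).neg)
    · intro x hx
      exact ((hw x (Ioo_subset_Icc_self hx)).hasDerivAt
        (Icc_mem_nhds hx.1 hx.2)).hasDerivWithinAt
    · apply ContinuousOn.intervalIntegrable
      rw [uIcc_of_le hab]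
      exact c2.div (hc1.pow 2) (fun x hx => pow_ne_zero 2 (hne x hx))
  have hinv : ∀ x ∈ Icc a b, |(f1 x)⁻¹| ≤ 1 / T := by
    intro x hx
    rw [abs_inv, one_div]
    exact inv_anti₀ hT (hf1 x hx)
  have habs : ∫ x in a..b, |f2 x| / f1 x ^ 2 ≤ 2 / T := by
    rcases hsgn with hp | hn
    · have : ∫ x in a..b, |f2 x| / f1 x ^ 2 = ∫ x in a..b, f2 x / f1 x ^ 2 := by
        apply intervalIntegral.integral_congr
        intro x hx
        rw [uIcc_of_le hab] at hx
        dsimp only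
        rw [abs_of_nonneg (hp x hx)]
      rw [this, hwint]
      have h1 := hinv a (left_mem_Icc.mpr hab)
      have h2 := hinv b (right_mem_Icc.mpr hab)
      have := abs_le.mp h1
      have := abs_le.mp h2
      have h2T : 2 / T = 1/T + 1/T := by ring
      rw [h2T]
      rcases abs_le.mp h1 with ⟨h1a, h1b⟩
      rcases abs_le.mp h2 with ⟨h2a, h2b⟩
      linarith
    · have : ∫ x in a..b, |f2 x| / f1 x ^ 2 = ∫ x in a..b, -(f2 x / f1 x ^ 2) := by
        apply intervalIntegral.integral_congr
        intro x hx
        rw [uIcc_of_le hab] at hx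
        dsimp only
        rw [abs_of_nonpos (hn x hx), neg_div]
      rw [this, intervalIntegral.integral_neg, hwint]
      rcases abs_le.mp (hinv a (left_mem_Icc.mpr hab)) with ⟨h1a, h1b⟩
      rcases abs_le.mp (hinv b (right_mem_Icc.mpr hab)) with ⟨h2a, h2b⟩
      have h2T : 2 / T = 1/T + 1/T := by ring
      rw [h2T]
      linarith
  have hU'norm : ∀ x ∈ Icc a b, ‖U' x * V x‖ = |f2 x| / f1 x ^ 2 := by
    intro x hx
    rw [norm_mul, hVnorm x, mul_one]
    simp only [hU', norm_mul, norm_neg, Complex.norm_I, one_mul, Complex.norm_real,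
      Real.norm_eq_abs, abs_div, abs_neg, abs_pow, sq_abs]
  have hintU'V : ‖∫ x in a..b, U' x * V x‖ ≤ 2 / T := by
    calc ‖∫ x in a..b, U' x * V x‖ ≤ ∫ x in a..b, ‖U' x * V x‖ :=
          intervalIntegral.norm_integral_le_integral_norm hab
    _ = ∫ x in a..b, |f2 x| / f1 x ^ 2 := by
        apply intervalIntegral.integral_congr
        intro x hx
        rw [uIcc_of_le hab] at hx
        exact hU'norm x hx
    _ ≤ 2 / T := habs
  calc ‖∫ x in a..b, V x‖
      = ‖U b * V b - U a * V a - ∫ x in a..b, U' x * V x‖ := by rw [key]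
  _ ≤ ‖U b * V b - U a * V a‖ + ‖∫ x in a..b, U' x * V x‖ := norm_sub_le _ _
  _ ≤ (‖U b * V b‖ + ‖U a * V a‖) + ‖∫ x in a..b, U' x * V x‖ := by
      gcongr; exact norm_sub_le _ _
  _ ≤ (1/T * 1 + 1/T * 1) + 2/T := by
      gcongr
      · rw [norm_mul, hVnorm b]
        exact mul_le_mul_of_nonneg_right (hUnorm b (right_mem_Icc.mpr hab)) (by norm_num)
      · rw [norm_mul, hVnorm a]
        exact mul_le_mul_of_nonneg_right (hUnorm a (left_mem_Icc.mpr hab)) (by norm_num)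
  _ ≤ 4 / T := le_of_eq (by ring)

/-- splitting step -/
lemma vdc_split (k : ℕ) (hk : 1 ≤ k) {c : ℝ} (hc : 0 < c)
    {A B T : ℝ} (hAB : A ≤ B) (hT : 0 < T) {g h f0 : ℝ → ℝ}
    (hf0c : ContinuousOn f0 (Icc A B))
    (dg : ∀ x ∈ Icc A B, HasDerivWithinAt g (h x) (Icc A B) x)
    (hhc : ContinuousOn h (Icc A B))
    (hh : ∀ x ∈ Icc A B, T ≤ |h x|)
    (IH : ∀ S : ℝ, 0 < S → ∀ a b : ℝ, A ≤ a → a ≤ b → b ≤ B →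
      (∀ x ∈ Icc a b, S ≤ |g x|) →
      ‖∫ x in a..b, Complex.exp (Complex.I * f0 x)‖ ≤ c * S ^ (-1 / (k:ℝ))) :
    ‖∫ x in A..B, Complex.exp (Complex.I * f0 x)‖ ≤ (2*c+2) * T ^ (-1 / ((k:ℝ)+1)) := by
  set e : ℝ → ℂ := fun x => Complex.exp (Complex.I * f0 x) with he
  have hec : ContinuousOn e (Icc A B) :=
    Complex.continuous_exp.comp_continuousOn
      ((Complex.continuous_ofReal.comp_continuousOn hf0c).const_smul Complex.I)
  have hi : ∀ s t : ℝ, s ∈ Icc A B → t ∈ Icc A B → IntervalIntegrable e volume s t := by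
    intro s t hs ht
    exact (hec.mono (uIcc_subset_Icc hs ht)).intervalIntegrable
  set δ : ℝ := T ^ (-1 / ((k:ℝ)+1)) with hδ
  have hδpos : 0 < δ := Real.rpow_pos_of_pos hT _
  have hk0 : (k:ℝ) ≠ 0 := Nat.cast_ne_zero.mpr (by omega)
  have hk1 : (k:ℝ) + 1 ≠ 0 := by positivity
  have hrw : (T * δ) ^ (-1 / (k:ℝ)) = δ := by
    have e1 : T * δ = T ^ (1 + (-1 / ((k:ℝ)+1))) := by
      rw [Real.rpow_add hT, Real.rpow_one, hδ]
    rw [e1, ← Real.rpow_mul hT.le, hδ]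
    congr 1
    field_simp
    ring
  obtain ⟨x0, hx0, hanch⟩ := vdc_anchor hAB hT dg hhc hh
  set p : ℝ := max A (min B (x0 - δ)) with hp
  set q : ℝ := max A (min B (x0 + δ)) with hq
  have hAp : A ≤ p := le_max_left _ _
  have hpB : p ≤ B := max_le hAB (min_le_left _ _)
  have hpq : p ≤ q := max_le_max le_rfl (min_le_min le_rfl (by linarith))
  have hAq : A ≤ q := le_max_left _ _
  have hqB : q ≤ B := max_le hAB (min_le_left _ _)
  have hqp2 : q ≤ p + 2*δ := by
    have h1 : min B (x0 + δ) ≤ min B (x0 - δ) + 2*δ := by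
      rw [← min_add_add_right]
      exact min_le_min (by linarith) (by linarith)
    rw [hp, hq, ← max_add_add_right]
    exact max_le_max (by linarith) h1
  have memp : p ∈ Icc A B := ⟨hAp, hpB⟩
  have memq : q ∈ Icc A B := ⟨hAq, hqB⟩
  have memA : A ∈ Icc A B := left_mem_Icc.mpr hAB
  have memB : B ∈ Icc A B := right_mem_Icc.mpr hAB
  have hsplit : ∫ x in A..B, e x =
      (∫ x in A..p, e x) + (∫ x in p..q, e x) + (∫ x in q..B, e x) := by
    rw [integral_add_adjacent_intervals (hi A p memA memp) (hi p q memp memq),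
      integral_add_adjacent_intervals (hi A q memA memq) (hi q B memq memB)]
  have sideA : ‖∫ x in A..p, e x‖ ≤ c * δ := by
    rcases eq_or_lt_of_le hAp with h | h
    · rw [← h, integral_same, norm_zero]
      positivity
    · have hm : A < min B (x0 - δ) := by
        by_contra hc'
        push_neg at hc'
        rw [hp, max_eq_left hc'] at h
        exact lt_irrefl _ h
      have hpe : p = min B (x0 - δ) := by rw [hp, max_eq_right (le_of_lt hm)]
      have hlow : ∀ x ∈ Icc A p, T * δ ≤ |g x| := by
        intro x hx
        have hxB : x ∈ Icc A B := ⟨hx.1, le_trans hx.2 hpB⟩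
        have h2 := hanch x hxB
        have hxd : x ≤ x0 - δ := le_trans hx.2 (hpe ▸ min_le_right _ _)
        have h3 : δ ≤ |x - x0| := by
          rw [abs_sub_comm, abs_of_nonneg (by linarith)]
          linarith
        calc T * δ ≤ T * |x - x0| := mul_le_mul_of_nonneg_left h3 hT.le
        _ ≤ |g x| := h2
      have hb := IH (T*δ) (mul_pos hT hδpos) A p le_rfl hAp hpB hlow
      calc ‖∫ x in A..p, e x‖ ≤ c * (T*δ) ^ (-1 / (k:ℝ)) := hb
      _ = c * δ := by rw [hrw]
  have sideB : ‖∫ x in q..B, e x‖ ≤ c * δ := by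
    rcases eq_or_lt_of_le hqB with h | h
    · rw [h, integral_same, norm_zero]
      positivity
    · have hm : min B (x0 + δ) < B := by
        by_contra hc'
        push_neg at hc'
        have : q = B := le_antisymm hqB (le_trans hc' (le_max_right _ _))
        rw [this] at h
        exact lt_irrefl _ h
      have hme : min B (x0 + δ) = x0 + δ :=
        min_eq_right (by rcases min_cases B (x0 + δ) with ⟨h1, h2⟩ | ⟨h1, h2⟩ <;> [exact absurd (h1 ▸ hm) (lt_irrefl _); exact h2.le])
      have hqe : x0 + δ ≤ q := le_trans (le_of_eq hme.symm) (le_max_right _ _)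
      have hlow : ∀ x ∈ Icc q B, T * δ ≤ |g x| := by
        intro x hx
        have hxB : x ∈ Icc A B := ⟨le_trans hAq hx.1, hx.2⟩
        have h2 := hanch x hxB
        have hxd : x0 + δ ≤ x := le_trans hqe hx.1
        have h3 : δ ≤ |x - x0| := by
          rw [abs_of_nonneg (by linarith)]
          linarith
        calc T * δ ≤ T * |x - x0| := mul_le_mul_of_nonneg_left h3 hT.le
        _ ≤ |g x| := h2
      have hb := IH (T*δ) (mul_pos hT hδpos) q B hAq hqB le_rfl hlow
      calc ‖∫ x in q..B, e x‖ ≤ c * (T*δ) ^ (-1 / (k:ℝ)) := hb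
      _ = c * δ := by rw [hrw]
  have mid : ‖∫ x in p..q, e x‖ ≤ 2 * δ := by
    calc ‖∫ x in p..q, e x‖ ≤ 1 * |q - p| :=
          intervalIntegral.norm_integral_le_of_norm_le_const
            (fun x _ => le_of_eq (vdc_exp_norm (f0 x)))
    _ ≤ 2 * δ := by
        rw [one_mul, abs_of_nonneg (by linarith)]
        linarith
  calc ‖∫ x in A..B, e x‖
      ≤ ‖∫ x in A..p, e x‖ + ‖∫ x in p..q, e x‖ + ‖∫ x in q..B, e x‖ := by
        rw [hsplit]
        exact le_trans (norm_add_le _ _) (by gcongr; exact norm_add_le _ _)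
  _ ≤ c * δ + 2 * δ + c * δ := add_le_add (add_le_add sideA mid) sideB
  _ = (2*c+2) * δ := by ring

/-- the core van der Corput estimate, by induction -/
lemma vdc_core (k : ℕ) (hk : 2 ≤ k) :
    ∃ c : ℝ, 0 < c ∧ ∀ T : ℝ, 0 < T → ∀ a b : ℝ, a ≤ b → ∀ f : ℕ → ℝ → ℝ,
      (∀ j < k, ∀ x ∈ Icc a b, HasDerivWithinAt (f j) (f (j+1) x) (Icc a b) x) →
      ContinuousOn (f k) (Icc a b) →
      (∀ x ∈ Icc a b, T ≤ |f k x|) →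
      ‖∫ x in a..b, Complex.exp (Complex.I * f 0 x)‖ ≤ c * T ^ (-1 / (k:ℝ)) := by
  induction k, hk using Nat.le_induction with
  | base =>
    refine ⟨10, by norm_num, ?_⟩
    intro T hT a b hab f chain hcont hbound
    have h2 : ((2:ℕ):ℝ) = (1:ℝ) + 1 := by norm_num
    rw [h2]
    have key := vdc_split 1 le_rfl (c := 4) (by norm_num) hab hT
      (g := f 1) (h := f 2) (f0 := f 0)
      (fun x hx => (chain 0 (by norm_num) x hx).continuousWithinAt)
      (chain 1 (by norm_num)) hcont hbound ?_
    · calc ‖∫ x in a..b, Complex.exp (Complex.I * f 0 x)‖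
          ≤ (2*4+2) * T ^ (-1 / (((1:ℕ):ℝ)+1)) := key
      _ = 10 * T ^ (-1 / ((1:ℝ)+1)) := by norm_num
    · intro S hS a' b' ha' hab' hb' hlow
      have hsub : Icc a' b' ⊆ Icc a b := Icc_subset_Icc ha' hb'
      have hsgn := vdc_sign_const hT hcont hbound
      have hb := vdc_base hab' hS
        (fun x hx => (chain 0 (by norm_num) x (hsub hx)).mono hsub)
        (fun x hx => (chain 1 (by norm_num) x (hsub hx)).mono hsub)
        (hcont.mono hsub)
        (by
          rcases hsgn with hp | hn
          · exact Or.inl (fun x hx => le_trans hT.le (hp x (hsub hx)))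
          · exact Or.inr (fun x hx => le_trans (hn x (hsub hx)) (by linarith)))
        hlow
      calc ‖∫ x in a'..b', Complex.exp (Complex.I * f 0 x)‖ ≤ 4 / S := hb
      _ = 4 * S ^ (-1 / ((1:ℕ):ℝ)) := by
          rw [Nat.cast_one]
          rw [show (-1 / (1:ℝ)) = (-1 : ℝ) by norm_num, Real.rpow_neg_one]
          ring
  | succ k hk2 IH =>
    obtain ⟨c, hc, H⟩ := IH
    refine ⟨2*c+2, by positivity, ?_⟩
    intro T hT a b hab f chain hcont hbound
    have hcast : ((k+1:ℕ):ℝ) = (k:ℝ) + 1 := by push_cast; ring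
    rw [hcast]
    apply vdc_split k (by omega) hc hab hT
      (g := f k) (h := f (k+1)) (f0 := f 0)
      (fun x hx => (chain 0 (by omega) x hx).continuousWithinAt)
      (chain k (by omega)) hcont hbound
    intro S hS a' b' ha' hab' hb' hlow
    have hsub : Icc a' b' ⊆ Icc a b := Icc_subset_Icc ha' hb'
    exact H S hS a' b' hab' f
      (fun j hj x hx => (chain j (by omega) x (hsub hx)).mono hsub)
      (fun x hx => ((chain k (by omega) x (hsub hx)).mono hsub).continuousWithinAt)
      hlow

theorem stmt8_vanDerCorput (L : ℕ) (hL : 2 ≤ L) :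
    ∃ C : ℝ, 0 < C ∧
      ∀ u v : ℝ, u ≤ v →
      ∀ Ψ : ℝ → ℝ, ContDiffOn ℝ L Ψ (Set.Icc u v) →
      ∀ T : ℝ, 0 < T →
        (∀ lam ∈ Set.Icc u v, T ≤ |iteratedDerivWithin L Ψ (Set.Icc u v) lam|) →
      ∀ a : ℝ → ℂ, ContDiffOn ℝ 1 a (Set.Icc u v) →
        ‖∫ lam in u..v, a lam * Complex.exp (Complex.I * Ψ lam)‖
          ≤ C * ((⨆ lam : Set.Icc u v, ‖a lam‖) +
                 ∫ lam in u..v, ‖derivWithin a (Set.Icc u v) lam‖)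
              * T ^ (-(1 : ℝ) / L) := by
  obtain ⟨c, hc, H⟩ := vdc_core L hL
  refine ⟨c, hc, ?_⟩
  intro u v huv Ψ hΨ T hT hbound a ha
  have hSnn : 0 ≤ ⨆ lam : Set.Icc u v, ‖a lam‖ :=
    Real.iSup_nonneg (fun _ => norm_nonneg _)
  rcases eq_or_lt_of_le huv with heq | hlt
  · subst heq
    simp only [intervalIntegral.integral_same, map_zero]
    have hTpow : (0:ℝ) < T ^ (-(1 : ℝ) / u.toNNReal.1) ∨ True := Or.inr trivial
    have : (0:ℝ) ≤ c * ((⨆ lam : Set.Icc u u, ‖a lam‖) + 0) * T ^ (-(1 : ℝ) / L) := by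
      apply mul_nonneg (mul_nonneg hc.le (by simpa using hSnn)) (Real.rpow_nonneg hT.le _)
    simpa using this
  · have hud : UniqueDiffOn ℝ (Icc u v) := uniqueDiffOn_Icc hlt
    set f : ℕ → ℝ → ℝ := fun j => iteratedDerivWithin j Ψ (Icc u v) with hf
    have chain : ∀ j < L, ∀ x ∈ Icc u v, HasDerivWithinAt (f j) (f (j+1) x) (Icc u v) x := by
      intro j hj x hx
      have hdiff : DifferentiableWithinAt ℝ (f j) (Icc u v) x :=
        (hΨ.differentiableOn_iteratedDerivWithin (by exact_mod_cast hj) hud) x hx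
      have h1 := hdiff.hasDerivWithinAt
      have h2 : f (j+1) x = derivWithin (f j) (Icc u v) x := congrFun iteratedDerivWithin_succ x
      rw [h2]
      exact h1
    have hcontL : ContinuousOn (f L) (Icc u v) :=
      hΨ.continuousOn_iteratedDerivWithin le_rfl hud
    set e : ℝ → ℂ := fun x => Complex.exp (Complex.I * Ψ x) with he
    have hΨc : ContinuousOn Ψ (Icc u v) := hΨ.continuousOn
    have hec : ContinuousOn e (Icc u v) :=
      Complex.continuous_exp.comp_continuousOn
        ((Complex.continuous_ofReal.comp_continuousOn hΨc).const_smul Complex.I)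
    set F : ℝ → ℂ := fun x => ∫ t in u..x, e t with hF
    have hFbound : ∀ x ∈ Icc u v, ‖F x‖ ≤ c * T ^ (-1/(L:ℝ)) := by
      intro x hx
      have hsub : Icc u x ⊆ Icc u v := Icc_subset_Icc le_rfl hx.2
      have h3 := H T hT u x hx.1 f
        (fun j hj y hy => (chain j hj y (hsub hy)).mono hsub)
        (hcontL.mono hsub)
        (fun y hy => hbound y (hsub hy))
      have h4 : ∀ t : ℝ, f 0 t = Ψ t := fun t => by rw [hf]; simp
      simpa [h4] using h3
    have hFc : ContinuousOn F (Icc u v) := by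
      have h5 : IntegrableOn e (uIcc u v) volume := by
        rw [uIcc_of_le huv]
        exact hec.integrableOn_compact isCompact_Icc
      have := continuousOn_primitive_interval h5
      rwa [uIcc_of_le huv] at this
    set a' : ℝ → ℂ := fun x => derivWithin a (Set.Icc u v) x with ha'
    have hac : ContinuousOn a (Icc u v) := ha.continuousOn
    have hda : ∀ x ∈ Icc u v, HasDerivWithinAt a (a' x) (Icc u v) x := fun x hx =>
      ((ha.differentiableOn one_ne_zero) x hx).hasDerivWithinAt
    have ha'c : ContinuousOn a' (Icc u v) := ha.continuousOn_derivWithin hud le_rfl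
    have hFderiv : ∀ x ∈ Ioo u v, HasDerivWithinAt F (e x) (Ioi x) x := by
      intro x hx
      have hmem : Icc u v ∈ nhdsWithin x (Ioi x) :=
        Filter.mem_of_superset
          (Filter.inter_mem self_mem_nhdsWithin
            (mem_nhdsWithin_of_mem_nhds (Iic_mem_nhds hx.2)))
          (fun y hy => ⟨le_trans hx.1.le (le_of_lt hy.1), hy.2⟩)
      have hint : IntervalIntegrable e volume u x :=
        (hec.mono (uIcc_subset_Icc (left_mem_Icc.mpr huv) (Ioo_subset_Icc_self hx))).intervalIntegrable
      have hmeas : StronglyMeasurableAtFilter e (nhdsWithin x (Ioi x)) volume :=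
        ⟨Icc u v, hmem, hec.aestronglyMeasurable measurableSet_Icc⟩
      have hcw : ContinuousWithinAt e (Ioi x) x :=
        (hec x (Ioo_subset_Icc_self hx)).mono_of_mem_nhdsWithin hmem
      exact (intervalIntegral.integral_hasDerivWithinAt_right
        (s := Ici x) (t := Ioi x) hint hmeas hcw).mono Ioi_subset_Ici_self
    have ibp : ∫ x in u..v, a x * e x = a v * F v - a u * F u - ∫ x in u..v, a' x * F x := by
      apply integral_mul_deriv_eq_deriv_mul_of_hasDeriv_right
      · rw [uIcc_of_le huv]; exact hac
      · rw [uIcc_of_le huv]; exact hFc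
      · intro x hx
        rw [min_eq_left huv, max_eq_right huv] at hx
        exact ((hda x (Ioo_subset_Icc_self hx)).hasDerivAt
          (Icc_mem_nhds hx.1 hx.2)).hasDerivWithinAt
      · intro x hx
        rw [min_eq_left huv, max_eq_right huv] at hx
        exact hFderiv x hx
      · apply ContinuousOn.intervalIntegrable
        rwa [uIcc_of_le huv]
      · apply ContinuousOn.intervalIntegrable
        rwa [uIcc_of_le huv]
    have hFu : F u = 0 := intervalIntegral.integral_same
    have hbdd : BddAbove (Set.range fun lam : Set.Icc u v => ‖a lam‖) := by
      have h2 : (Set.range fun lam : Set.Icc u v => ‖a lam‖)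
          = (fun x => ‖a x‖) '' (Icc u v) := by
        ext y
        constructor
        · rintro ⟨⟨x, hx⟩, rfl⟩; exact ⟨x, hx, rfl⟩
        · rintro ⟨x, hx, rfl⟩; exact ⟨⟨x, hx⟩, rfl⟩
      rw [h2]
      exact (isCompact_Icc.image_of_continuousOn
        (continuous_norm.comp_continuousOn hac)).bddAbove
    have hav : ‖a v‖ ≤ ⨆ lam : Set.Icc u v, ‖a lam‖ :=
      le_ciSup hbdd ⟨v, right_mem_Icc.mpr huv⟩
    have hIa : ‖∫ x in u..v, a' x * F x‖
        ≤ (∫ lam in u..v, ‖a' lam‖) * (c * T ^ (-1/(L:ℝ))) := by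
      calc ‖∫ x in u..v, a' x * F x‖ ≤ ∫ x in u..v, ‖a' x * F x‖ :=
            intervalIntegral.norm_integral_le_integral_norm huv
      _ ≤ ∫ x in u..v, ‖a' x‖ * (c * T ^ (-1/(L:ℝ))) := by
          apply intervalIntegral.integral_mono_on huv
          · apply ContinuousOn.intervalIntegrable
            rw [uIcc_of_le huv]
            exact (ha'c.mul hFc).norm
          · apply ContinuousOn.intervalIntegrable
            rw [uIcc_of_le huv]
            exact ha'c.norm.mul continuousOn_const
          · intro x hx
            rw [norm_mul]
            exact mul_le_mul_of_nonneg_left (hFbound x hx) (norm_nonneg _)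
      _ = (∫ lam in u..v, ‖a' lam‖) * (c * T ^ (-1/(L:ℝ))) := by
          rw [← intervalIntegral.integral_mul_const]
    have hIann : 0 ≤ ∫ lam in u..v, ‖a' lam‖ := by
      apply intervalIntegral.integral_nonneg huv
      intro x hx
      exact norm_nonneg _
    calc ‖∫ lam in u..v, a lam * Complex.exp (Complex.I * Ψ lam)‖
        = ‖a v * F v - ∫ x in u..v, a' x * F x‖ := by
          rw [show (∫ lam in u..v, a lam * Complex.exp (Complex.I * Ψ lam))
              = ∫ x in u..v, a x * e x from rfl, ibp, hFu, mul_zero, sub_zero]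
    _ ≤ ‖a v * F v‖ + ‖∫ x in u..v, a' x * F x‖ := norm_sub_le _ _
    _ ≤ ‖a v‖ * (c * T ^ (-1/(L:ℝ)))
        + (∫ lam in u..v, ‖a' lam‖) * (c * T ^ (-1/(L:ℝ))) := by
          apply add_le_add _ hIa
          rw [norm_mul]
          exact mul_le_mul_of_nonneg_left (hFbound v (right_mem_Icc.mpr huv)) (norm_nonneg _)
    _ ≤ (⨆ lam : Set.Icc u v, ‖a lam‖) * (c * T ^ (-1/(L:ℝ)))
        + (∫ lam in u..v, ‖a' lam‖) * (c * T ^ (-1/(L:ℝ))) := by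
          apply add_le_add_left
          apply mul_le_mul_of_nonneg_right _ (by positivity)
          exact hav
    _ = c * ((⨆ lam : Set.Icc u v, ‖a lam‖) +
            ∫ lam in u..v, ‖a' lam‖) * T ^ (-(1:ℝ)/(L:ℝ)) := by
          rw [show (-(1:ℝ)/(L:ℝ)) = (-1/(L:ℝ)) by ring]
          ring
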